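/- As a special case of subsampling amplification: if a mechanism M satisfies ε-DP (δ = 0), then the mechanism that first applies Poisson subsampling with rate β = n/N to a dataset of size N and then applies M satisfies ln(1 + (n/N)(e^ε − 1))-DP. -/

import Mathlib

open scoped ENNReal
open scoped Classical

/-- `ε`-differential privacy with respect to a neighboring relation `N`. -/
def DP {D Ω : Type*} (N : D → D → Prop) (M : D → PMF Ω) (ε : ℝ) : Prop :=
  ∀ d d', N d d' → ∀ O : Set Ω,
    (M d).toOuterMeasure O ≤ ENNReal.ofReal (Real.exp ε) * (M d').toOuterMeasure O

/-- Neighboring datasets differ by addition or removal of one record. -/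
def Neighbor {X : Type*} (d d' : List X) : Prop :=
  ∃ l₁ l₂ x, (d = l₁ ++ x :: l₂ ∧ d' = l₁ ++ l₂) ∨ (d' = l₁ ++ x :: l₂ ∧ d = l₁ ++ l₂)

/-- The Bernoulli `PMF` with an `ℝ≥0∞` parameter, as `PMF.bernoulli` was in the older Mathlib. -/
noncomputable def bernoulliENNReal (p : ℝ≥0∞) (h : p ≤ 1) : PMF Bool :=
  PMF.ofFintype (fun b => cond b p (1 - p)) (by simp [h])

/-- Poisson subsampling: each record of the dataset is included independently with
probability `β`. -/
noncomputable def poissonSample {X : Type*} (β : ℝ≥0∞) (h : β ≤ 1) :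
    List X → PMF (List X)
  | [] => PMF.pure []
  | x :: xs => (bernoulliENNReal β h).bind fun b =>
      (poissonSample β h xs).map fun s => if b then x :: s else s

section aux

variable {X : Type*}

lemma tsum_pmf_map {α β : Type*} (p : PMF α) (g : α → β) (f : β → ℝ≥0∞) :
    ∑' b, (p.map g) b * f b = ∑' a, p a * f (g a) := by
  calc ∑' b, (p.map g) b * f b
      = ∑' b, ∑' a, (if b = g a then p a else 0) * f b := by
        refine tsum_congr fun b => ?_
        rw [PMF.map_apply, ENNReal.tsum_mul_right]
    _ = ∑' a, ∑' b, (if b = g a then p a else 0) * f b := ENNReal.tsum_comm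
    _ = ∑' a, p a * f (g a) := by
        refine tsum_congr fun a => ?_
        rw [tsum_eq_single (g a) (fun b hb => by simp [hb])]
        simp

lemma tsum_pmf_bind {α β : Type*} (p : PMF α) (q : α → PMF β) (f : β → ℝ≥0∞) :
    ∑' b, (p.bind q) b * f b = ∑' a, p a * ∑' b, q a b * f b := by
  calc ∑' b, (p.bind q) b * f b
      = ∑' b, ∑' a, p a * q a b * f b := by
        refine tsum_congr fun b => ?_
        rw [PMF.bind_apply, ENNReal.tsum_mul_right]
    _ = ∑' a, ∑' b, p a * q a b * f b := ENNReal.tsum_comm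
    _ = ∑' a, p a * ∑' b, q a b * f b := by
        refine tsum_congr fun a => ?_
        simp_rw [mul_assoc]
        rw [ENNReal.tsum_mul_left]

noncomputable def Psum (β : ℝ≥0∞) (h : β ≤ 1) (f : List X → ℝ≥0∞) (d : List X) : ℝ≥0∞ :=
  ∑' s, poissonSample β h d s * f s

lemma Psum_cons (β : ℝ≥0∞) (h : β ≤ 1) (f : List X → ℝ≥0∞) (y : X) (t : List X) :
    Psum β h f (y :: t) =
      β * Psum β h (fun s => f (y :: s)) t + (1 - β) * Psum β h f t := by
  simp only [Psum, poissonSample]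
  rw [tsum_pmf_bind, tsum_bool]
  simp only [bernoulliENNReal, PMF.ofFintype_apply, Bool.cond_false, Bool.cond_true, if_true, if_false,
    tsum_pmf_map]
  norm_num
  ring

lemma Psum_mono (β : ℝ≥0∞) (h : β ≤ 1) {f g : List X → ℝ≥0∞} (hfg : ∀ s, f s ≤ g s)
    (d : List X) : Psum β h f d ≤ Psum β h g d :=
  ENNReal.tsum_le_tsum fun s => mul_le_mul_right (hfg s) _

lemma Psum_const_mul (β : ℝ≥0∞) (h : β ≤ 1) (c : ℝ≥0∞) (f : List X → ℝ≥0∞) (d : List X) :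
    Psum β h (fun s => c * f s) d = c * Psum β h f d := by
  simp only [Psum]
  rw [← ENNReal.tsum_mul_left]
  exact tsum_congr fun s => by ring

end aux

section key
variable {X : Type*}

lemma Psum_insert_le (β : ℝ≥0∞) (h : β ≤ 1) (E : ℝ≥0∞) :
    ∀ (l₁ : List X) (f : List X → ℝ≥0∞),
      (∀ a b x, f (a ++ x :: b) ≤ E * f (a ++ b)) →
      ∀ (l₂ : List X) (x : X),
      Psum β h f (l₁ ++ x :: l₂) ≤ (β * E + (1 - β)) * Psum β h f (l₁ ++ l₂)
  | [], f, Hf, l₂, x => by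
      simp only [List.nil_append]
      rw [Psum_cons]
      have hA : Psum β h (fun s => f (x :: s)) l₂ ≤ E * Psum β h f l₂ := by
        rw [← Psum_const_mul]
        exact Psum_mono _ _ (fun s => Hf [] s x) _
      calc β * Psum β h (fun s => f (x :: s)) l₂ + (1 - β) * Psum β h f l₂
          ≤ β * (E * Psum β h f l₂) + (1 - β) * Psum β h f l₂ :=
            add_le_add_left (mul_le_mul_right hA β) _
        _ = (β * E + (1 - β)) * Psum β h f l₂ := by ring
  | y :: l₁, f, Hf, l₂, x => by
      simp only [List.cons_append]
      rw [Psum_cons, Psum_cons]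
      have h1 := Psum_insert_le β h E l₁ (fun s => f (y :: s))
        (fun a b x' => Hf (y :: a) b x') l₂ x
      have h2 := Psum_insert_le β h E l₁ f Hf l₂ x
      calc β * Psum β h (fun s => f (y :: s)) (l₁ ++ x :: l₂)
            + (1 - β) * Psum β h f (l₁ ++ x :: l₂)
          ≤ β * ((β * E + (1 - β)) * Psum β h (fun s => f (y :: s)) (l₁ ++ l₂))
            + (1 - β) * ((β * E + (1 - β)) * Psum β h f (l₁ ++ l₂)) :=
            add_le_add (mul_le_mul_right h1 β) (mul_le_mul_right h2 _)
        _ = (β * E + (1 - β)) * (β * Psum β h (fun s => f (y :: s)) (l₁ ++ l₂)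
            + (1 - β) * Psum β h f (l₁ ++ l₂)) := by ring

lemma Psum_remove_le (β : ℝ≥0∞) (h : β ≤ 1) (E : ℝ≥0∞) (hE0 : E ≠ 0) (hEt : E ≠ ∞)
    (c : ℝ≥0∞) (hc : 1 ≤ c * (β * E⁻¹ + (1 - β))) :
    ∀ (l₁ : List X) (f : List X → ℝ≥0∞),
      (∀ a b x, f (a ++ b) ≤ E * f (a ++ x :: b)) →
      ∀ (l₂ : List X) (x : X),
      Psum β h f (l₁ ++ l₂) ≤ c * Psum β h f (l₁ ++ x :: l₂)
  | [], f, Hf, l₂, x => by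
      simp only [List.nil_append]
      rw [Psum_cons]
      set A := Psum β h (fun s => f (x :: s)) l₂ with hAdef
      set B := Psum β h f l₂ with hBdef
      have hBE : B ≤ E * A := by
        rw [hBdef, hAdef, ← Psum_const_mul]
        exact Psum_mono _ _ (fun s => Hf [] s x) _
      have hA : E⁻¹ * B ≤ A := by
        calc E⁻¹ * B ≤ E⁻¹ * (E * A) := mul_le_mul_right hBE _
          _ = A := by rw [← mul_assoc, ENNReal.inv_mul_cancel hE0 hEt, one_mul]
      calc B = 1 * B := (one_mul B).symm
        _ ≤ (c * (β * E⁻¹ + (1 - β))) * B := mul_le_mul_left hc B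
        _ = c * (β * (E⁻¹ * B) + (1 - β) * B) := by ring
        _ ≤ c * (β * A + (1 - β) * B) :=
            mul_le_mul_right (add_le_add_left (mul_le_mul_right hA β) _) c
  | y :: l₁, f, Hf, l₂, x => by
      simp only [List.cons_append]
      rw [Psum_cons, Psum_cons]
      have h1 := Psum_remove_le β h E hE0 hEt c hc l₁ (fun s => f (y :: s))
        (fun a b x' => Hf (y :: a) b x') l₂ x
      have h2 := Psum_remove_le β h E hE0 hEt c hc l₁ f Hf l₂ x
      calc β * Psum β h (fun s => f (y :: s)) (l₁ ++ l₂)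
            + (1 - β) * Psum β h f (l₁ ++ l₂)
          ≤ β * (c * Psum β h (fun s => f (y :: s)) (l₁ ++ x :: l₂))
            + (1 - β) * (c * Psum β h f (l₁ ++ x :: l₂)) :=
            add_le_add (mul_le_mul_right h1 β) (mul_le_mul_right h2 _)
        _ = c * (β * Psum β h (fun s => f (y :: s)) (l₁ ++ x :: l₂)
            + (1 - β) * Psum β h f (l₁ ++ x :: l₂)) := by ring

end key

theorem subsampled_mechanism_dp' {X Ω : Type*} (M : List X → PMF Ω) (ε : ℝ)
    (hε : 0 ≤ ε) (hM : ∀ d d', (∃ l₁ l₂ x, (d = l₁ ++ x :: l₂ ∧ d' = l₁ ++ l₂) ∨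
      (d' = l₁ ++ x :: l₂ ∧ d = l₁ ++ l₂)) → ∀ O : Set Ω,
      (M d).toOuterMeasure O ≤ ENNReal.ofReal (Real.exp ε) * (M d').toOuterMeasure O)
    (n N : ℕ) (hn : 0 < n) (hnN : n ≤ N)
    (hβ : ((n : ℝ≥0∞) / (N : ℝ≥0∞)) ≤ 1) :
    ∀ d d', (∃ l₁ l₂ x, (d = l₁ ++ x :: l₂ ∧ d' = l₁ ++ l₂) ∨
      (d' = l₁ ++ x :: l₂ ∧ d = l₁ ++ l₂)) → ∀ O : Set Ω,
      ((poissonSample ((n : ℝ≥0∞) / (N : ℝ≥0∞)) hβ d).bind M).toOuterMeasure O ≤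
        ENNReal.ofReal (Real.exp (Real.log (1 + ((n : ℝ) / (N : ℝ)) * (Real.exp ε - 1)))) *
        ((poissonSample ((n : ℝ≥0∞) / (N : ℝ≥0∞)) hβ d').bind M).toOuterMeasure O := by
  have hN : 0 < N := lt_of_lt_of_le hn hnN
  set β : ℝ≥0∞ := (n : ℝ≥0∞) / (N : ℝ≥0∞) with hβdef
  set br : ℝ := (n : ℝ) / (N : ℝ) with hbrdef
  have hbr0 : 0 ≤ br := by positivity
  have hbr1 : br ≤ 1 := by
    rw [hbrdef, div_le_one (by exact_mod_cast hN)]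
    exact_mod_cast hnN
  set e : ℝ := Real.exp ε with hedef
  have he1 : 1 ≤ e := Real.one_le_exp hε
  have he0 : 0 < e := Real.exp_pos ε
  have hβr : β = ENNReal.ofReal br := by
    rw [hβdef, hbrdef, ENNReal.ofReal_div_of_pos (by exact_mod_cast hN)]
    simp [ENNReal.ofReal_natCast]
  have h1β : 1 - β = ENNReal.ofReal (1 - br) := by
    rw [hβr, ENNReal.ofReal_sub _ hbr0, ENNReal.ofReal_one]
  have hexp : Real.exp (Real.log (1 + br * (e - 1))) = 1 + br * (e - 1) :=
    Real.exp_log (by nlinarith)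
  set c : ℝ≥0∞ := ENNReal.ofReal (Real.exp (Real.log (1 + br * (e - 1)))) with hcdef
  set E : ℝ≥0∞ := ENNReal.ofReal e with hEdef
  have hE0 : E ≠ 0 := by simp [hEdef, ENNReal.ofReal_eq_zero]; linarith
  have hEt : E ≠ ∞ := ENNReal.ofReal_ne_top
  have hc1 : β * E + (1 - β) ≤ c := by
    rw [h1β, hβr, hEdef, hcdef, hexp, ← ENNReal.ofReal_mul hbr0, ← ENNReal.ofReal_add
      (by positivity) (by linarith)]
    exact ENNReal.ofReal_le_ofReal (by ring_nf; linarith)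
  have hc2 : 1 ≤ c * (β * E⁻¹ + (1 - β)) := by
    rw [h1β, hβr, hEdef, hcdef, hexp, ← ENNReal.ofReal_inv_of_pos he0,
      ← ENNReal.ofReal_mul hbr0, ← ENNReal.ofReal_add (by positivity) (by linarith),
      ← ENNReal.ofReal_mul (by nlinarith), ← ENNReal.ofReal_one]
    refine ENNReal.ofReal_le_ofReal ?_
    have key : e * ((1 + br * (e - 1)) * (br * e⁻¹ + (1 - br))) =
        e + br * (1 - br) * (e - 1) ^ 2 := by
      field_simp
      ring
    nlinarith [mul_nonneg (mul_nonneg hbr0 (by linarith : (0:ℝ) ≤ 1 - br))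
      (sq_nonneg (e - 1))]
  intro d d' hdd' O
  obtain ⟨l₁, l₂, x, hcase⟩ := hdd'
  simp only [PMF.toOuterMeasure_bind_apply]
  set f : List X → ℝ≥0∞ := fun s => (M s).toOuterMeasure O with hfdef
  show Psum β hβ f d ≤ c * Psum β hβ f d'
  rcases hcase with ⟨hd, hd'⟩ | ⟨hd', hd⟩
  · subst hd; subst hd'
    refine le_trans (Psum_insert_le β hβ E l₁ f
      (fun a b y => hM _ _ ⟨a, b, y, Or.inl ⟨rfl, rfl⟩⟩ O) l₂ x) ?_
    exact mul_le_mul_left hc1 _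
  · subst hd; subst hd'
    exact Psum_remove_le β hβ E hE0 hEt c hc2 l₁ f
      (fun a b y => hM _ _ ⟨a, b, y, Or.inr ⟨rfl, rfl⟩⟩ O) l₂ x

/-- Special case of subsampling amplification: if `M` is `ε`-DP, then Poisson
subsampling at rate `n/N` followed by `M` is `log (1 + (n/N)(exp ε − 1))`-DP. -/
theorem subsampled_mechanism_dp {X Ω : Type*} (M : List X → PMF Ω) (ε : ℝ)
    (hε : 0 ≤ ε) (hM : DP Neighbor M ε)
    (n N : ℕ) (hn : 0 < n) (hnN : n ≤ N)
    (hβ : ((n : ℝ≥0∞) / (N : ℝ≥0∞)) ≤ 1) :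
    DP Neighbor (fun d => (poissonSample ((n : ℝ≥0∞) / (N : ℝ≥0∞)) hβ d).bind M)
      (Real.log (1 + ((n : ℝ) / (N : ℝ)) * (Real.exp ε - 1))) := by
  intro d d' hdd' O
  exact subsampled_mechanism_dp' M ε hε hM n N hn hnN hβ d d' hdd' O
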